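/- Let p ∈ [1, ∞), T > 0, and let 0 = t_0 < t_1 < … < t_L = T. Suppose P : [0,T) → ℝ^{n×n} is the piecewise constant function with P(t) = P^(l) for t_{l−1} ≤ t < t_l, where each P^(l) ∈ ℝ^{n×n} satisfies det P^(l) > 0. Then there exists a constant C > 0 such that for every ε > 0 there exists a continuous function P^ε : [0,T] → ℝ^{n×n} with ‖P^ε − P‖_{L^p(0,T;ℝ^{n×n})} < ε, det P^ε(t) > 0 for all t ∈ [0,T], and ‖P^ε(t)‖ ≤ C for all t ∈ [0,T], where ‖·‖ denotes the Frobenius norm on ℝ^{n×n}. -/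

import Mathlib

open Matrix

/-- Frobenius norm of a square real matrix. -/
noncomputable def frobNorm {n : ℕ} (M : Matrix (Fin n) (Fin n) ℝ) : ℝ :=
  Real.sqrt (∑ i, ∑ j, (M i j) ^ 2)

noncomputable def matVec {n : ℕ} (M : Matrix (Fin n) (Fin n) ℝ) : EuclideanSpace ℝ (Fin n × Fin n) :=
  (WithLp.equiv 2 _).symm (fun q : Fin n × Fin n => M q.1 q.2)

lemma frob_nonneg {n : ℕ} (M : Matrix (Fin n) (Fin n) ℝ) : 0 ≤ frobNorm M :=
  Real.sqrt_nonneg _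

lemma frob_zero {n : ℕ} : frobNorm (0 : Matrix (Fin n) (Fin n) ℝ) = 0 := by
  simp [frobNorm]

lemma frob_eq {n : ℕ} (M : Matrix (Fin n) (Fin n) ℝ) : frobNorm M = ‖matVec M‖ := by
  rw [EuclideanSpace.norm_eq, frobNorm]
  congr 1
  rw [Fintype.sum_prod_type]
  simp [matVec, sq_abs]

lemma frob_sub_le {n : ℕ} (A B : Matrix (Fin n) (Fin n) ℝ) :
    frobNorm (A - B) ≤ frobNorm A + frobNorm B := by
  rw [frob_eq, frob_eq, frob_eq]
  have : matVec (A - B) = matVec A - matVec B := rfl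
  rw [this]
  exact norm_sub_le _ _

lemma frob_continuous {n : ℕ} : Continuous (frobNorm (n := n)) := by
  apply Real.continuous_sqrt.comp
  exact continuous_finset_sum _ fun i _ => continuous_finset_sum _ fun j _ =>
    ((continuous_apply_apply i j).pow 2)

variable {N : ℕ}

noncomputable def rotM (i j : Fin N) (θ : ℝ) : Matrix (Fin N) (Fin N) ℝ :=
  1 + (Real.cos θ - 1) • (single i i 1 + single j j 1)
    + Real.sin θ • (single i j 1 - single j i 1)

lemma rotM_mul_neg (i j : Fin N) (hij : i ≠ j) (θ : ℝ) :
    rotM i j θ * rotM i j (-θ) = 1 := by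
  set P : Matrix (Fin N) (Fin N) ℝ := single i i 1 + single j j 1 with hP
  set Q : Matrix (Fin N) (Fin N) ℝ := single i j 1 - single j i 1 with hQ
  have hPP : P * P = P := by
    simp [hP, add_mul, mul_add, single_mul_single_same, single_mul_single_of_ne, hij, hij.symm]
  have hPQ : P * Q = Q := by
    simp [hP, hQ, add_mul, mul_add, mul_sub, single_mul_single_same,
      single_mul_single_of_ne, hij, hij.symm]
  have hQP : Q * P = Q := by
    simp [hP, hQ, add_mul, mul_add, sub_mul, single_mul_single_same,
      single_mul_single_of_ne, hij, hij.symm]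
    abel
  have hQQ : Q * Q = -P := by
    simp [hP, hQ, sub_mul, mul_sub, single_mul_single_same, single_mul_single_of_ne, hij, hij.symm]
    abel
  have expand : rotM i j θ * rotM i j (-θ)
      = 1 + ((Real.cos θ - 1) + (Real.cos θ - 1) + (Real.cos θ - 1)*(Real.cos θ - 1)
          + Real.sin θ * Real.sin θ) • P := by
    rw [rotM, rotM, Real.cos_neg, Real.sin_neg]
    rw [add_mul, add_mul, mul_add, mul_add, mul_add, mul_add, mul_add, mul_add]
    rw [← hP, ← hQ]
    simp only [one_mul, mul_one, smul_mul_assoc, mul_smul_comm, hPP, hPQ, hQP, hQQ,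
      smul_smul, smul_neg, neg_smul, add_smul, mul_neg, neg_neg, mul_comm]
    module
  rw [expand]
  have : (Real.cos θ - 1) + (Real.cos θ - 1) + (Real.cos θ - 1)*(Real.cos θ - 1)
      + Real.sin θ * Real.sin θ = 0 := by
    have := Real.sin_sq_add_cos_sq θ
    ring_nf
    nlinarith [this]
  rw [this, zero_smul, add_zero]

lemma rotM_zero (i j : Fin N) : rotM i j 0 = 1 := by
  simp [rotM]

lemma rotM_det_ne (i j : Fin N) (hij : i ≠ j) (θ : ℝ) : (rotM i j θ).det ≠ 0 := by
  have h := rotM_mul_neg i j hij θ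
  have : (rotM i j θ).det * (rotM i j (-θ)).det = 1 := by
    rw [← det_mul, h, det_one]
  exact left_ne_zero_of_mul_eq_one this

lemma rotM_continuous (i j : Fin N) : Continuous fun θ => rotM i j θ := by
  unfold rotM
  exact ((continuous_const.add (((Real.continuous_cos).sub continuous_const).smul
    continuous_const)).add ((Real.continuous_sin).smul continuous_const))

lemma diag_mul_rotM_pi (D : Fin N → ℝ) (i j : Fin N) (hij : i ≠ j) :
    diagonal D * rotM i j Real.pi
      = diagonal (fun x => if x = i ∨ x = j then -D x else D x) := by
  rw [rotM, Real.cos_pi, Real.sin_pi]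
  ext a b
  simp only [mul_add, mul_one, zero_smul, add_zero, Matrix.mul_one, Matrix.add_apply,
    Matrix.smul_apply, Matrix.mul_apply, diagonal_apply, Matrix.add_apply,
    single, Matrix.of_apply, smul_eq_mul]
  rw [Finset.sum_eq_single a]
  · by_cases hab : a = b <;> by_cases hai : a = i <;> by_cases haj : a = j <;>
      subst_vars <;> simp_all [Matrix.one_apply, eq_comm] <;> ring
  · intro x _ hxa
    simp [Ne.symm hxa]
  · simp

lemma joined_sign_upgrade {A B : Matrix (Fin N) (Fin N) ℝ} (hA : 0 < A.det)
    (h : JoinedIn {M : Matrix (Fin N) (Fin N) ℝ | M.det ≠ 0} A B) :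
    JoinedIn {M : Matrix (Fin N) (Fin N) ℝ | 0 < M.det} A B := by
  obtain ⟨γ, hγ⟩ := h
  have key : ∀ x, 0 < (γ x).det := by
    by_contra hc
    push_neg at hc
    obtain ⟨x₀, hx₀⟩ := hc
    have hf : Continuous fun r : ℝ => (γ.extend r).det := γ.continuous_extend.matrix_det
    obtain ⟨r, hr⟩ := intermediate_value_univ₂ (a := (x₀ : ℝ)) (b := (0 : ℝ)) hf
      (continuous_const (y := (0:ℝ)))
      (by rw [γ.extend_extends']; exact hx₀)
      (by rw [γ.extend_zero]; exact hA.le)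
    have : γ.extend r = γ (Set.projIcc 0 1 zero_le_one r) := rfl
    rw [this] at hr
    exact hγ _ hr
  exact ⟨γ, fun x => key x⟩

lemma joined_mul {A A' B B' : Matrix (Fin N) (Fin N) ℝ}
    (h1 : JoinedIn {M : Matrix (Fin N) (Fin N) ℝ | M.det ≠ 0} A A')
    (h2 : JoinedIn {M : Matrix (Fin N) (Fin N) ℝ | M.det ≠ 0} B B') :
    JoinedIn {M : Matrix (Fin N) (Fin N) ℝ | M.det ≠ 0} (A * B) (A' * B') := by
  obtain ⟨γ, hγ⟩ := h1
  obtain ⟨η, hη⟩ := h2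
  refine ⟨⟨⟨fun x => γ x * η x, γ.continuous.matrix_mul η.continuous⟩, by simp, by simp⟩,
    fun x => ?_⟩
  simp only [Path.coe_mk_mk, Set.mem_setOf_eq, det_mul]
  exact mul_ne_zero (hγ x) (hη x)

lemma joined_flip (D : Fin N → ℝ) (hD : ∀ x, D x ≠ 0) (i j : Fin N) (hij : i ≠ j) :
    JoinedIn {M : Matrix (Fin N) (Fin N) ℝ | M.det ≠ 0} (diagonal D)
      (diagonal (fun x => if x = i ∨ x = j then -D x else D x)) := by
  have hdet : (diagonal D).det ≠ 0 := by
    rw [det_diagonal]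
    exact Finset.prod_ne_zero_iff.2 fun x _ => hD x
  refine ⟨⟨⟨fun x => diagonal D * rotM i j ((x : ℝ) * Real.pi),
      continuous_const.matrix_mul ((rotM_continuous i j).comp
        (continuous_subtype_val.mul continuous_const))⟩, ?_, ?_⟩, fun x => ?_⟩
  · simp [rotM_zero]
  · simp [diag_mul_rotM_pi D i j hij]
  · simp only [Path.coe_mk_mk, Set.mem_setOf_eq, det_mul]
    exact mul_ne_zero hdet (rotM_det_ne i j hij _)

lemma joined_segment (D D' : Fin N → ℝ) (h : ∀ x, 0 < D x * D' x) :
    JoinedIn {M : Matrix (Fin N) (Fin N) ℝ | M.det ≠ 0} (diagonal D) (diagonal D') := by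
  refine ⟨⟨⟨fun x => diagonal (fun i => (1 - (x : ℝ)) * D i + (x : ℝ) * D' i), ?_⟩, ?_, ?_⟩,
    fun x => ?_⟩
  · exact Continuous.matrix_diagonal (by
      exact continuous_pi fun i => ((continuous_const.sub continuous_subtype_val).mul
        continuous_const).add (continuous_subtype_val.mul continuous_const))
  · simp
  · simp
  · simp only [Path.coe_mk_mk, Set.mem_setOf_eq, det_diagonal]
    refine Finset.prod_ne_zero_iff.2 fun i _ => ?_
    have hx0 : (0:ℝ) ≤ (x : ℝ) := x.2.1
    have hx1 : (x : ℝ) ≤ 1 := x.2.2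
    rcases mul_pos_iff.1 (h i) with ⟨ha, hb⟩ | ⟨ha, hb⟩
    · rcases lt_or_ge (x : ℝ) 1 with h1 | h1
      · nlinarith
      · have : (x : ℝ) = 1 := le_antisymm hx1 h1
        rw [this]; simpa using hb.ne'
    · rcases lt_or_ge (x : ℝ) 1 with h1 | h1
      · nlinarith
      · have : (x : ℝ) = 1 := le_antisymm hx1 h1
        rw [this]; simpa using hb.ne

lemma joined_transvec (tv : TransvectionStruct (Fin N) ℝ) :
    JoinedIn {M : Matrix (Fin N) (Fin N) ℝ | M.det ≠ 0} tv.toMatrix 1 := by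
  refine ⟨⟨⟨fun x => transvection tv.i tv.j ((1 - (x : ℝ)) * tv.c), ?_⟩, ?_, ?_⟩, fun x => ?_⟩
  · apply continuous_matrix
    intro a b
    unfold transvection
    simp only [Matrix.add_apply, single, Matrix.of_apply]
    by_cases h : tv.i = a ∧ tv.j = b
    · simp only [h, if_true]
      exact continuous_const.add ((continuous_const.sub continuous_subtype_val).mul
        continuous_const)
    · simp only [h, if_false]
      exact continuous_const.add continuous_const
  · show transvection tv.i tv.j ((1 - ((0 : unitInterval) : ℝ)) * tv.c) = _
    norm_num [TransvectionStruct.toMatrix]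
  · show transvection tv.i tv.j ((1 - ((1 : unitInterval) : ℝ)) * tv.c) = _
    norm_num [transvection_zero]
  · simp only [Path.coe_mk_mk, Set.mem_setOf_eq]
    rw [det_transvection_of_ne _ _ tv.hij]
    exact one_ne_zero

lemma sign_reduce (i₀ : Fin N) : ∀ k : ℕ, ∀ ε : Fin N → ℝ,
    (∀ i, ε i = 1 ∨ ε i = -1) → (Finset.univ.filter (fun i => ε i = -1)).card = k →
    JoinedIn {M : Matrix (Fin N) (Fin N) ℝ | M.det ≠ 0} (diagonal ε) 1 ∨
    JoinedIn {M : Matrix (Fin N) (Fin N) ℝ | M.det ≠ 0} (diagonal ε)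
      (diagonal (fun i => if i = i₀ then (-1 : ℝ) else 1)) := by
  intro k
  induction k using Nat.strong_induction_on with
  | _ k IH =>
  intro ε hε hcard
  have hne : ∀ x, ε x ≠ 0 := by
    intro x; rcases hε x with h | h <;> rw [h] <;> norm_num
  have hone : (1 : Matrix (Fin N) (Fin N) ℝ) ∈ {M : Matrix (Fin N) (Fin N) ℝ | M.det ≠ 0} := by
    simp
  match k, hcard with
  | 0, hcard =>
    left
    have : ∀ i, ε i = 1 := by
      intro i
      rcases hε i with h | h
      · exact h
      · exfalso
        have : i ∈ Finset.univ.filter (fun i => ε i = -1) := by simp [h]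
        rw [Finset.card_eq_zero.1 hcard] at this
        simp at this
    have : diagonal ε = 1 := by
      rw [show ε = fun _ => (1:ℝ) from funext this, diagonal_one]
    rw [this]
    exact JoinedIn.refl hone
  | 1, hcard =>
    obtain ⟨i, hi⟩ := Finset.card_eq_one.1 hcard
    have hiε : ε i = -1 := by
      have : i ∈ Finset.univ.filter (fun i => ε i = -1) := by rw [hi]; simp
      simpa using this
    have hothers : ∀ j, j ≠ i → ε j = 1 := by
      intro j hj
      rcases hε j with h | h
      · exact h
      · exfalso
        have : j ∈ Finset.univ.filter (fun i => ε i = -1) := by simp [h]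
        rw [hi] at this
        simp at this
        exact hj this
    by_cases hii : i = i₀
    · right
      have : ε = fun j => if j = i₀ then (-1 : ℝ) else 1 := by
        funext j
        by_cases hj : j = i₀
        · rw [hj, if_pos rfl, ← hii, hiε]
        · rw [if_neg hj, hothers j (by rw [hii]; exact hj)]
      rw [this]
      exact JoinedIn.refl (by
        simp only [Set.mem_setOf_eq, det_diagonal]
        rw [Finset.prod_eq_single i₀ (fun b _ hb => by rw [if_neg hb]) (by simp)]
        norm_num)
    · right
      have h2 := joined_flip ε hne i i₀ hii
      have : (fun x => if x = i ∨ x = i₀ then -ε x else ε x)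
          = fun j => if j = i₀ then (-1 : ℝ) else 1 := by
        funext j
        by_cases hj0 : j = i₀
        · rw [hj0, if_pos (Or.inr rfl), if_pos rfl, hothers i₀ (fun h => hii h.symm)]
        · by_cases hji : j = i
          · rw [hji, if_pos (Or.inl rfl), hiε, if_neg (by rwa [hji] at hj0)]
            norm_num
          · rw [if_neg (by tauto), if_neg hj0, hothers j hji]
      rw [this] at h2
      exact h2
  | (m + 2), hcard =>
    obtain ⟨a, ha, b, hb, hab⟩ := Finset.one_lt_card.1 (by omega :
      1 < (Finset.univ.filter (fun i => ε i = -1)).card)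
    have haε : ε a = -1 := by simpa using ha
    have hbε : ε b = -1 := by simpa using hb
    have h2 := joined_flip ε hne a b hab
    set ε' : Fin N → ℝ := fun x => if x = a ∨ x = b then -ε x else ε x with hε'
    have hε'pm : ∀ i, ε' i = 1 ∨ ε' i = -1 := by
      intro i
      rcases hε i with h | h <;> by_cases hi : i = a ∨ i = b <;>
        simp [hε', hi, h]
    have hfilter : Finset.univ.filter (fun i => ε' i = -1)
        = ((Finset.univ.filter (fun i => ε i = -1)).erase a).erase b := by
      ext x
      simp only [Finset.mem_filter, Finset.mem_univ, true_and, Finset.mem_erase]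
      by_cases hxa : x = a
      · subst hxa
        norm_num [hε', haε]
      · by_cases hxb : x = b
        · subst hxb
          norm_num [hε', hbε]
        · simp only [hε']
          rw [if_neg (by tauto)]
          tauto
    have hcard' : (Finset.univ.filter (fun i => ε' i = -1)).card = m := by
      rw [hfilter, Finset.card_erase_of_mem (Finset.mem_erase.2 ⟨fun h => hab h.symm, hb⟩),
        Finset.card_erase_of_mem ha, hcard]
      omega
    rcases IH m (by omega) ε' hε'pm hcard' with h3 | h3
    · exact Or.inl (h2.trans h3)
    · exact Or.inr (h2.trans h3)

lemma joined_to_one_or_J (i₀ : Fin N) (M : Matrix (Fin N) (Fin N) ℝ) (hM : M.det ≠ 0) :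
    JoinedIn {M : Matrix (Fin N) (Fin N) ℝ | M.det ≠ 0} M 1 ∨
    JoinedIn {M : Matrix (Fin N) (Fin N) ℝ | M.det ≠ 0} M
      (diagonal (fun i => if i = i₀ then (-1 : ℝ) else 1)) := by
  apply diagonal_transvection_induction_of_det_ne_zero _ M hM
  · intro D hD
    have hDne : ∀ i, D i ≠ 0 := by
      rw [det_diagonal] at hD
      exact fun i => Finset.prod_ne_zero_iff.1 hD i (Finset.mem_univ i)
    have hseg := joined_segment D (fun i => if D i < 0 then (-1:ℝ) else 1) (by
      intro i
      show 0 < D i * (if D i < 0 then (-1:ℝ) else 1)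
      by_cases h : D i < 0
      · rw [if_pos h]; nlinarith
      · rw [if_neg h]
        have := (hDne i).lt_or_gt
        rcases this with h' | h'
        · exact absurd h' h
        · nlinarith)
    rcases sign_reduce i₀ _ (fun i => if D i < 0 then (-1:ℝ) else 1)
      (fun i => by by_cases h : D i < 0 <;> simp [h]) rfl with h | h
    · exact Or.inl (hseg.trans h)
    · exact Or.inr (hseg.trans h)
  · intro tv
    exact Or.inl (joined_transvec tv)
  · intro A B hA hB pA pB
    have hJJ : (diagonal (fun i => if i = i₀ then (-1 : ℝ) else 1)) *
        (diagonal (fun i => if i = i₀ then (-1 : ℝ) else 1)) = 1 := by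
      rw [diagonal_mul_diagonal]
      rw [show (fun i => (if i = i₀ then (-1:ℝ) else 1) * (if i = i₀ then (-1:ℝ) else 1))
        = fun _ => (1:ℝ) from funext fun i => by by_cases h : i = i₀ <;> simp [h]]
      exact diagonal_one
    rcases pA with h1 | h1 <;> rcases pB with h2 | h2
    · have := joined_mul h1 h2; rw [mul_one] at this; exact Or.inl this
    · have := joined_mul h1 h2; rw [one_mul] at this; exact Or.inr this
    · have := joined_mul h1 h2; rw [mul_one] at this; exact Or.inr this
    · have := joined_mul h1 h2; rw [hJJ] at this; exact Or.inl this

lemma joinedIn_pos (A B : Matrix (Fin N) (Fin N) ℝ) (hA : 0 < A.det) (hB : 0 < B.det) :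
    JoinedIn {M : Matrix (Fin N) (Fin N) ℝ | 0 < M.det} A B := by
  rcases Nat.eq_zero_or_pos N with hN | hN
  · subst hN
    have : A = B := Subsingleton.elim A B
    rw [this]
    exact JoinedIn.refl hB
  · set i₀ : Fin N := ⟨0, hN⟩
    have hdetJ : (diagonal (fun i => if i = i₀ then (-1 : ℝ) else 1)).det = -1 := by
      rw [det_diagonal, Finset.prod_eq_single i₀ (fun b _ hb => by rw [if_neg hb]) (by simp)]
      simp
    have notJ : ∀ M : Matrix (Fin N) (Fin N) ℝ, 0 < M.det →
        ¬ JoinedIn {M : Matrix (Fin N) (Fin N) ℝ | M.det ≠ 0} M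
          (diagonal (fun i => if i = i₀ then (-1 : ℝ) else 1)) := by
      intro M hM hjoin
      have := (joined_sign_upgrade hM hjoin).target_mem
      rw [Set.mem_setOf_eq, hdetJ] at this
      linarith
    rcases joined_to_one_or_J i₀ A hA.ne' with h1 | h1
    · rcases joined_to_one_or_J i₀ B hB.ne' with h2 | h2
      · exact joined_sign_upgrade hA (h1.trans h2.symm)
      · exact absurd h2 (notJ B hB)
    · exact absurd h1 (notJ A hA)

open MeasureTheory

/-- Lemma: continuous approximation of a piecewise-constant,
positive-determinant matrix path in Lᵖ, with uniform bound and positive determinant. -/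
theorem stmt_3 (n : ℕ) (p T : ℝ) (hp : 1 ≤ p) (hT : 0 < T)
    (L : ℕ) (hL : 0 < L) (t : Fin (L + 1) → ℝ)
    (ht0 : t 0 = 0) (htL : t (Fin.last L) = T) (hmono : StrictMono t)
    (Pm : Fin L → Matrix (Fin n) (Fin n) ℝ) (hdet : ∀ l, 0 < (Pm l).det)
    (P : ℝ → Matrix (Fin n) (Fin n) ℝ)
    (hP : ∀ l : Fin L, ∀ s ∈ Set.Ico (t l.castSucc) (t l.succ), P s = Pm l) :
    ∃ C > 0, ∀ ε > 0, ∃ Pε : ℝ → Matrix (Fin n) (Fin n) ℝ,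
      ContinuousOn Pε (Set.Icc 0 T) ∧
      (∫ s in Set.Ioo (0 : ℝ) T, (frobNorm (Pε s - P s)) ^ p) ^ (1 / p) < ε ∧
      ∀ s ∈ Set.Icc (0 : ℝ) T, 0 < (Pε s).det ∧ frobNorm (Pε s) ≤ C := by
  have hp0 : (0:ℝ) < p := lt_of_lt_of_le one_pos hp
  set A : ℕ → Matrix (Fin n) (Fin n) ℝ := fun k => Pm ⟨min k (L-1), by omega⟩ with hAdef
  set τ : ℕ → ℝ := fun k => t ⟨min k L, by omega⟩ with hτdef
  have hAk : ∀ k (hk : k < L), A k = Pm ⟨k, hk⟩ := by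
    intro k hk
    simp only [hAdef]
    exact congrArg Pm (Fin.mk_eq_mk.mpr (by omega))
  have hτk : ∀ k (hk : k ≤ L), τ k = t ⟨k, by omega⟩ := by
    intro k hk
    simp only [hτdef]
    exact congrArg t (Fin.mk_eq_mk.mpr (by omega))
  have hτmono : ∀ j k, j ≤ k → τ j ≤ τ k := by
    intro j k hjk
    exact hmono.monotone (by simp [Fin.mk_le_mk]; omega)
  have hτlt : ∀ j k, j < k → k ≤ L → τ j < τ k := by
    intro j k hjk hkL
    exact hmono (by simp [Fin.mk_lt_mk]; omega)
  have hτ0 : τ 0 = 0 := by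
    rw [hτk 0 (by omega), show (⟨0, by omega⟩ : Fin (L+1)) = 0 from rfl, ht0]
  have hτL : τ L = T := by
    rw [hτk L le_rfl, show (⟨L, by omega⟩ : Fin (L+1)) = Fin.last L from rfl, htL]
  -- choose paths
  have hjoin : ∀ k : ℕ, ∃ γ : Path (A k) (A (k+1)), ∀ x, 0 < ((γ x).det) := by
    intro k
    obtain ⟨γ, hγ⟩ := joinedIn_pos (A k) (A (k+1)) (hdet _) (hdet _)
    exact ⟨γ, fun x => hγ x⟩
  choose γ hγ using hjoin
  -- uniform bound
  have hbound : ∀ k : ℕ, ∃ c : ℝ, ∀ x, frobNorm ((γ k) x) ≤ c := by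
    intro k
    obtain ⟨x₀, -, hx₀⟩ := isCompact_univ.exists_isMaxOn Set.univ_nonempty
      ((frob_continuous.comp (γ k).continuous).continuousOn)
    exact ⟨_, fun x => hx₀ (Set.mem_univ x)⟩
  choose c hc using hbound
  set C : ℝ := 1 + ∑ k ∈ Finset.range L, |c k| with hCdef
  have hC : 0 < C := by
    have : (0:ℝ) ≤ ∑ k ∈ Finset.range L, |c k| :=
      Finset.sum_nonneg fun k _ => abs_nonneg _
    linarith
  have hCk : ∀ k, k < L → ∀ x, frobNorm ((γ k) x) ≤ C := by
    intro k hk x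
    have h1 : |c k| ≤ ∑ j ∈ Finset.range L, |c j| :=
      Finset.single_le_sum (fun j _ => abs_nonneg (c j)) (Finset.mem_range.2 hk)
    have h2 := le_abs_self (c k)
    have := hc k x
    simp only [hCdef]
    linarith
  refine ⟨C, hC, ?_⟩
  intro ε hε
  -- choose δ
  set δ₁ : ℝ := (Finset.range L).inf' ⟨0, Finset.mem_range.2 hL⟩ (fun l => τ (l+1) - τ l)
    with hδ₁def
  have hδ₁pos : 0 < δ₁ := by
    rw [hδ₁def]
    refine (Finset.lt_inf'_iff _).2 ?_
    intro l hl
    have := hτlt l (l+1) (by omega) (by simp at hl; omega)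
    linarith
  set B : ℝ := (2*C)^p * L with hBdef
  have hBpos : 0 < B := by
    have h1 : (0:ℝ) < (2*C)^p := Real.rpow_pos_of_pos (by linarith) p
    have h2 : (0:ℝ) < L := by exact_mod_cast hL
    positivity
  set δ : ℝ := min δ₁ (ε^p / (2*B)) with hδdef
  have hδpos : 0 < δ := by
    apply lt_min hδ₁pos
    have : (0:ℝ) < ε^p := Real.rpow_pos_of_pos hε p
    positivity
  have hδgap : ∀ l, l < L → δ ≤ τ (l+1) - τ l := by
    intro l hl
    exact le_trans (min_le_left _ _) (Finset.inf'_le _ (Finset.mem_range.2 hl))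
  have hδB : B * δ ≤ ε^p/2 := by
    have h1 : B * δ ≤ B * (ε^p/(2*B)) :=
      mul_le_mul_of_nonneg_left (min_le_right _ _) hBpos.le
    have h2 : B * (ε^p/(2*B)) = ε^p/2 := by
      field_simp
    linarith
  -- the pieces
  set f : ℕ → ℝ → Matrix (Fin n) (Fin n) ℝ :=
    fun k s => (γ k).extend ((s - (τ (k+1) - δ)) / δ) with hfdef
  have hf1 : ∀ k s, s ≤ τ (k+1) - δ → f k s = A k := by
    intro k s hs
    rw [hfdef]
    exact (γ k).extend_of_le_zero (div_nonpos_of_nonpos_of_nonneg (by linarith) hδpos.le)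
  have hf2 : ∀ k s, τ (k+1) ≤ s → f k s = A (k+1) := by
    intro k s hs
    rw [hfdef]
    exact (γ k).extend_of_one_le ((le_div_iff₀ hδpos).2 (by linarith))
  have hf3 : ∀ k, Continuous (f k) :=
    fun k => (γ k).continuous_extend.comp ((continuous_id.sub continuous_const).div_const δ)
  have hf4 : ∀ k s, ∃ x : unitInterval, f k s = (γ k) x := fun k s => ⟨_, rfl⟩
  -- glue
  set H : ℕ → ℝ → Matrix (Fin n) (Fin n) ℝ :=
    fun k => Nat.rec (f 0) (fun k Hk => fun s => if s ≤ τ (k+1) then Hk s else f (k+1) s) k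
    with hHdef
  have hH0 : H 0 = f 0 := rfl
  have hHsuccF : ∀ k, H (k+1) = fun s => if s ≤ τ (k+1) then H k s else f (k+1) s :=
    fun k => rfl
  have hHsucc : ∀ k s, H (k+1) s = if s ≤ τ (k+1) then H k s else f (k+1) s :=
    fun k s => rfl
  have hH2 : ∀ k, k < L → ∀ s, τ (k+1) ≤ s → H k s = f k s := by
    intro k
    induction k with
    | zero => intro _ s _; rfl
    | succ k ih =>
      intro hk s hs
      rw [hHsucc]
      have hlt : τ (k+1) < τ (k+2) := hτlt (k+1) (k+2) (by omega) (by omega)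
      rw [if_neg (by push_neg; linarith)]
  have hH1 : ∀ k, k < L → Continuous (H k) := by
    intro k
    induction k with
    | zero => intro _; exact hf3 0
    | succ k ih =>
      intro hk
      rw [hHsuccF]
      apply Continuous.if_le (ih (by omega)) (hf3 (k+1)) continuous_id continuous_const
      intro s hs
      simp only [id_eq] at hs
      have h1 : H k s = f k s := hH2 k (by omega) s hs.ge
      have h2 : f k s = A (k+1) := hf2 k s hs.ge
      have h3 : f (k+1) s = A (k+1) := by
        apply hf1
        have := hδgap (k+1) hk
        rw [hs]
        linarith
      rw [h1, h2, h3]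
  have hH3 : ∀ k s, ∃ j, j ≤ k ∧ H k s = f j s := by
    intro k
    induction k with
    | zero => intro s; exact ⟨0, le_rfl, rfl⟩
    | succ k ih =>
      intro s
      rw [hHsucc]
      by_cases h : s ≤ τ (k+1)
      · obtain ⟨j, hj, hjs⟩ := ih s
        exact ⟨j, by omega, by rw [if_pos h]; exact hjs⟩
      · exact ⟨k+1, le_rfl, by rw [if_neg h]⟩
  have hH4 : ∀ k, k < L → ∀ l, l ≤ k → ∀ s, τ l ≤ s → s ≤ τ (l+1) → H k s = f l s := by
    intro k
    induction k with
    | zero =>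
      intro _ l hl s _ _
      interval_cases l
      rfl
    | succ k ih =>
      intro hk l hl s h1 h2
      rw [hHsucc]
      rcases Nat.lt_succ_iff_lt_or_eq.1 (Nat.lt_succ_of_le hl) with hlk | hlk
      · have hle : s ≤ τ (k+1) := le_trans h2 (hτmono (l+1) (k+1) (by omega))
        rw [if_pos hle]
        exact ih (by omega) l (by omega) s h1 h2
      · subst hlk
        by_cases h : s ≤ τ (k+1)
        · have hseq : s = τ (k+1) := le_antisymm h h1
          rw [if_pos h, hH2 k (by omega) s h1, hf2 k s h1]
          symm
          apply hf1
          have := hδgap (k+1) hk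
          rw [hseq]
          linarith
        · rw [if_neg h]
  set Pε : ℝ → Matrix (Fin n) (Fin n) ℝ := H (L-1) with hPεdef
  have hPεcont : Continuous Pε := hH1 (L-1) (by omega)
  have hPεval : ∀ s, ∃ j, j < L ∧ ∃ x : unitInterval, Pε s = (γ j) x := by
    intro s
    obtain ⟨j, hj, hjs⟩ := hH3 (L-1) s
    exact ⟨j, by omega, by rw [hPεdef, hjs]; exact hf4 j s⟩
  have hPεdet : ∀ s, 0 < (Pε s).det := by
    intro s
    obtain ⟨j, _, x, hx⟩ := hPεval s
    rw [hx]; exact hγ j x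
  have hPεnorm : ∀ s, frobNorm (Pε s) ≤ C := by
    intro s
    obtain ⟨j, hj, x, hx⟩ := hPεval s
    rw [hx]; exact hCk j hj x
  have hPεeq : ∀ l, l < L → ∀ s, τ l ≤ s → s ≤ τ (l+1) - δ → Pε s = A l := by
    intro l hl s h1 h2
    have h2' : s ≤ τ (l+1) := by linarith
    rw [hPεdef, hH4 (L-1) (by omega) l (by omega) s h1 h2', hf1 l s h2]
  -- classification of points in [0, T)
  have hcl : ∀ s, 0 ≤ s → s < T → ∃ l : ℕ, ∃ hl : l < L,
      τ l ≤ s ∧ s < τ (l+1) ∧ P s = Pm ⟨l, hl⟩ ∧ A l = Pm ⟨l, hl⟩ := by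
    intro s hs0 hsT
    set F := (Finset.range L).filter (fun l => τ l ≤ s) with hFdef
    have hFne : F.Nonempty := ⟨0, by
      simp only [hFdef, Finset.mem_filter, Finset.mem_range]
      exact ⟨hL, by rw [hτ0]; exact hs0⟩⟩
    set l := F.max' hFne with hldef
    have hlF : l ∈ F := F.max'_mem hFne
    have hlL : l < L := by
      have := (Finset.mem_filter.1 hlF).1
      simpa using this
    have hτl : τ l ≤ s := (Finset.mem_filter.1 hlF).2
    have hlt : s < τ (l+1) := by
      by_contra hge
      push_neg at hge
      rcases Nat.lt_or_ge (l+1) L with hcase | hcase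
      · have : l + 1 ∈ F := Finset.mem_filter.2 ⟨Finset.mem_range.2 hcase, hge⟩
        have := F.le_max' _ this
        omega
      · have hLl : l + 1 = L := by omega
        rw [hLl, hτL] at hge
        linarith
    refine ⟨l, hlL, hτl, hlt, ?_, hAk l hlL⟩
    apply hP ⟨l, hlL⟩
    constructor
    · rw [show (⟨l, hlL⟩ : Fin L).castSucc = ⟨l, by omega⟩ from rfl]
      rw [hτk l (by omega)] at hτl
      exact hτl
    · rw [show (⟨l, hlL⟩ : Fin L).succ = ⟨l+1, by omega⟩ from rfl]
      rw [hτk (l+1) (by omega)] at hlt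
      exact hlt
  -- the exceptional set
  set E : Set ℝ := ⋃ l ∈ Finset.range L, Set.Ioc (τ (l+1) - δ) (τ (l+1)) with hEdef
  have hEmeas : MeasurableSet E :=
    (Finset.range L).measurableSet_biUnion (fun l _ => measurableSet_Ioc)
  have hEvol : volume E ≤ ENNReal.ofReal (L * δ) := by
    refine le_trans (measure_biUnion_finset_le _ _) ?_
    have heach : ∀ l ∈ Finset.range L,
        volume (Set.Ioc (τ (l+1) - δ) (τ (l+1))) = ENNReal.ofReal δ := by
      intro l _
      rw [Real.volume_Ioc]
      congr 1
      ring
    rw [Finset.sum_congr rfl heach, Finset.sum_const, Finset.card_range, nsmul_eq_mul,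
      ENNReal.ofReal_mul (by positivity : (0:ℝ) ≤ (L:ℝ))]
    rw [ENNReal.ofReal_natCast]
  -- pointwise bound
  have hpt : ∀ s ∈ Set.Ioo (0:ℝ) T,
      (frobNorm (Pε s - P s)) ^ p ≤ E.indicator (fun _ => (2*C)^p) s := by
    intro s hs
    obtain ⟨l, hl, h1, h2, hPs, hAl⟩ := hcl s hs.1.le hs.2
    by_cases hmem : s ∈ E
    · rw [Set.indicator_of_mem hmem]
      apply Real.rpow_le_rpow (frob_nonneg _) ?_ (by linarith)
      have hPnorm : frobNorm (P s) ≤ C := by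
        rw [hPs, ← hAl]
        have : A l = (γ l) 0 := ((γ l).source).symm
        rw [this]
        exact hCk l hl 0
      calc frobNorm (Pε s - P s) ≤ frobNorm (Pε s) + frobNorm (P s) := frob_sub_le _ _
        _ ≤ C + C := add_le_add (hPεnorm s) hPnorm
        _ = 2*C := by ring
    · rw [Set.indicator_of_notMem hmem]
      have hsle : s ≤ τ (l+1) - δ := by
        by_contra hgt
        push_neg at hgt
        exact hmem (Set.mem_biUnion (Finset.mem_coe.2 (Finset.mem_range.2 hl))
          ⟨hgt, h2.le⟩)
      rw [hPεeq l hl s h1 hsle, hPs, ← hAl, sub_self, frob_zero,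
        Real.zero_rpow (by linarith)]
  -- integral bound
  have hind : Integrable (E.indicator fun _ => (2*C)^p) (volume.restrict (Set.Ioo 0 T)) :=
    (integrableOn_const measure_Ioo_lt_top.ne).indicator hEmeas
  have hInt1 : (∫ s in Set.Ioo (0:ℝ) T, (frobNorm (Pε s - P s)) ^ p)
      ≤ ∫ s in Set.Ioo (0:ℝ) T, E.indicator (fun _ => (2*C)^p) s := by
    apply integral_mono_of_nonneg
    · exact Filter.Eventually.of_forall fun s => Real.rpow_nonneg (frob_nonneg _) p
    · exact hind
    · exact (ae_restrict_iff' measurableSet_Ioo).2 (Filter.Eventually.of_forall hpt)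
  have hInt2 : (∫ s in Set.Ioo (0:ℝ) T, E.indicator (fun _ => (2*C)^p) s) ≤ B * δ := by
    rw [integral_indicator hEmeas, setIntegral_const, measureReal_restrict_apply hEmeas,
      smul_eq_mul]
    have hvol : (volume (E ∩ Set.Ioo 0 T)).toReal ≤ L * δ :=
      ENNReal.toReal_le_of_le_ofReal (by positivity)
        (le_trans (measure_mono Set.inter_subset_left) hEvol)
    have h2C : (0:ℝ) ≤ (2*C)^p := Real.rpow_nonneg (by linarith) p
    calc (volume (E ∩ Set.Ioo 0 T)).toReal * (2*C)^p ≤ (L * δ) * (2*C)^p :=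
          mul_le_mul_of_nonneg_right hvol h2C
      _ = B * δ := by rw [hBdef]; ring
  have hI0 : 0 ≤ ∫ s in Set.Ioo (0:ℝ) T, (frobNorm (Pε s - P s)) ^ p :=
    integral_nonneg fun s => Real.rpow_nonneg (frob_nonneg _) p
  have hIlt : (∫ s in Set.Ioo (0:ℝ) T, (frobNorm (Pε s - P s)) ^ p) < ε ^ p := by
    have hεp : (0:ℝ) < ε^p := Real.rpow_pos_of_pos hε p
    linarith
  refine ⟨Pε, hPεcont.continuousOn, ?_, fun s _ => ⟨hPεdet s, hPεnorm s⟩⟩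
  calc (∫ s in Set.Ioo (0:ℝ) T, (frobNorm (Pε s - P s)) ^ p) ^ (1/p)
      < (ε ^ p) ^ (1/p) := Real.rpow_lt_rpow hI0 hIlt (by positivity)
    _ = ε := by rw [one_div, Real.rpow_rpow_inv hε.le (by positivity)]
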